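/- Let E/F be a finite Galois extension of fields whose Galois group is cyclic of order t, generated by α. Let ρ : G → GL(d,E) be an absolutely irreducible representation of a group G, and suppose C ∈ GL(d,E) satisfies C⁻¹ρ(g)C = ρ(g)^α for all g ∈ G. Then C·C^α·C^{α²}···C^{α^{t−1}} = μI, where μ is an element of F and I is the d×d identity matrix. -/

import Mathlib

/-- Proposition (1.1): if `C ∈ GL(d,E)` conjugates `ρ(g)` to `ρ(g)^α` for all `g ∈ G`,
where `ρ` is absolutely irreducible and the Galois group of `E/F` is cyclic of order `t`
generated by `α`, then `C·C^α·C^{α²}···C^{α^{t−1}} = μ·I` with `μ ∈ F`. -/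
theorem glasby_howlett_prop_1_1
    {F E : Type*} [Field F] [Field E] [Algebra F E]
    [FiniteDimensional F E] [IsGalois F E]
    (t : ℕ) (α : E ≃ₐ[F] E) (hord : orderOf α = t)
    (hgen : ∀ σ : E ≃ₐ[F] E, σ ∈ Subgroup.zpowers α)
    {G : Type*} [Group G] {d : ℕ}
    (ρ : G →* GL (Fin d) E)
    (hirr : Submodule.span E (Set.range fun g => (ρ g : Matrix (Fin d) (Fin d) E)) = ⊤)
    (C : GL (Fin d) E)
    (hC : ∀ g : G, ((C⁻¹ * ρ g * C : GL (Fin d) E) : Matrix (Fin d) (Fin d) E)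
        = (ρ g : Matrix (Fin d) (Fin d) E).map ⇑α) :
    ∃ μ : F,
      ((List.range t).map fun i =>
          (C : Matrix (Fin d) (Fin d) E).map ⇑(α ^ i)).prod
        = algebraMap F E μ • (1 : Matrix (Fin d) (Fin d) E) := by
  classical
  rcases Nat.eq_zero_or_pos d with hd | hd
  · subst hd
    exact ⟨1, Subsingleton.elim _ _⟩
  set Cm : Matrix (Fin d) (Fin d) E := (C : Matrix (Fin d) (Fin d) E) with hCm
  have mapmul : ∀ (σ : E ≃ₐ[F] E) (A B : Matrix (Fin d) (Fin d) E),
      (A * B).map ⇑σ = A.map ⇑σ * B.map ⇑σ := fun σ A B =>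
    Matrix.map_mul (f := (σ : E →+* E))
  have mapcomp : ∀ (σ τ : E ≃ₐ[F] E) (A : Matrix (Fin d) (Fin d) E),
      (A.map ⇑τ).map ⇑σ = A.map ⇑(σ * τ) := by
    intro σ τ A
    rw [Matrix.map_map]
    rfl
  have mapone : ∀ A : Matrix (Fin d) (Fin d) E, A.map ⇑(1 : E ≃ₐ[F] E) = A := by
    intro A
    rw [show ⇑(1 : E ≃ₐ[F] E) = id from rfl, Matrix.map_id]
  have hmap0 : ∀ A : Matrix (Fin d) (Fin d) E, A.map ⇑(α ^ 0) = A := by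
    intro A; rw [pow_zero, mapone]
  -- the basic intertwining relation, as matrices
  have hCg : ∀ g : G, (ρ g : Matrix (Fin d) (Fin d) E) * Cm
      = Cm * ((ρ g : Matrix (Fin d) (Fin d) E)).map ⇑α := by
    intro g
    have h := hC g
    have h2 : ((C * (C⁻¹ * ρ g * C) : GL (Fin d) E) : Matrix (Fin d) (Fin d) E)
        = Cm * ((ρ g : Matrix (Fin d) (Fin d) E)).map ⇑α := by
      rw [Units.val_mul, h]
    calc (ρ g : Matrix (Fin d) (Fin d) E) * Cm
        = ((ρ g * C : GL (Fin d) E) : Matrix (Fin d) (Fin d) E) := rfl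
      _ = ((C * (C⁻¹ * ρ g * C) : GL (Fin d) E) : Matrix (Fin d) (Fin d) E) := by
            group
      _ = _ := h2
  -- partial products
  set P : ℕ → Matrix (Fin d) (Fin d) E :=
    fun n => ((List.range n).map fun i => Cm.map ⇑(α ^ i)).prod with hP
  have hPsucc : ∀ n, P (n + 1) = P n * Cm.map ⇑(α ^ n) := by
    intro n
    simp [hP, List.range_succ]
  -- intertwining at level n
  have key : ∀ (g : G) (n : ℕ), (ρ g : Matrix (Fin d) (Fin d) E) * P n
      = P n * ((ρ g : Matrix (Fin d) (Fin d) E)).map ⇑(α ^ n) := by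
    intro g n
    induction n with
    | zero => rw [hmap0]; simp [hP]
    | succ n ih =>
      have step : ((ρ g : Matrix (Fin d) (Fin d) E)).map ⇑(α ^ n) * Cm.map ⇑(α ^ n)
          = Cm.map ⇑(α ^ n) * ((ρ g : Matrix (Fin d) (Fin d) E)).map ⇑(α ^ (n + 1)) := by
        have := congrArg (fun A => A.map ⇑(α ^ n)) (hCg g)
        simpa only [mapmul, mapcomp, pow_succ] using this
      rw [hPsucc, ← mul_assoc, ih, mul_assoc, step, mul_assoc]
  -- shift formula for mapping the partial products by α
  have hmapP : ∀ n, (P n).map ⇑α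
      = ((List.range n).map fun i => Cm.map ⇑(α ^ (i + 1))).prod := by
    intro n
    induction n with
    | zero =>
      simp only [hP, List.range_zero, List.map_nil, List.prod_nil]
      exact Matrix.map_one _ (map_zero α) (map_one α)
    | succ n ih =>
      rw [hPsucc, mapmul, ih, mapcomp, List.range_succ]
      simp only [List.map_append, List.prod_append, List.map_cons, List.prod_cons,
        List.map_nil, List.prod_nil, mul_one]
      rw [← pow_succ']
  -- P t commutes with every ρ g
  have hαt : α ^ t = 1 := by rw [← hord]; exact pow_orderOf_eq_one α
  have hcomm : ∀ g : G, Commute (ρ g : Matrix (Fin d) (Fin d) E) (P t) := by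
    intro g
    have := key g t
    rwa [hαt, mapone] at this
  -- P t commutes with everything, hence is scalar
  have hcommAll : ∀ A : Matrix (Fin d) (Fin d) E, Commute A (P t) := by
    intro A
    have hA : A ∈ Submodule.span E
        (Set.range fun g => (ρ g : Matrix (Fin d) (Fin d) E)) := by
      rw [hirr]; trivial
    induction hA using Submodule.span_induction with
    | mem x hx => obtain ⟨g, rfl⟩ := hx; exact hcomm g
    | zero => exact Commute.zero_left _
    | add x y _ _ hx hy => exact hx.add_left hy
    | smul c x _ hx => exact hx.smul_left c
  obtain ⟨c, hc⟩ : P t ∈ Set.range (Matrix.scalar (Fin d)) :=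
    Matrix.mem_range_scalar_iff_commute_single.mpr fun i j _ => hcommAll _
  -- shift of indices gives C * (P t).map α = P t * C
  have hshift : Cm * (P t).map ⇑α = P t * Cm := by
    rcases Nat.eq_zero_or_pos t with ht | ht
    · subst ht
      simp [hP]
    · obtain ⟨s, rfl⟩ : ∃ s, t = s + 1 := ⟨t - 1, (Nat.succ_pred_eq_of_pos ht).symm⟩
      have lhs : Cm * ((List.range (s + 1)).map fun i => Cm.map ⇑(α ^ (i + 1))).prod
          = ((List.range (s + 1 + 1)).map fun i => Cm.map ⇑(α ^ i)).prod := by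
        conv_rhs => rw [List.range_succ_eq_map]
        simp only [List.map_cons, List.prod_cons, List.map_map]
        rw [hmap0]
        rfl
      have rhs : P (s + 1) * Cm = P (s + 1 + 1) := by
        rw [hPsucc (s + 1), hαt, mapone]
      rw [hmapP, lhs, rhs]
  -- P t = scalar c
  have hscal : P t = c • (1 : Matrix (Fin d) (Fin d) E) := by
    rw [← hc, Matrix.scalar_apply, ← Matrix.smul_one_eq_diagonal]
  have hmap_scal : (P t).map ⇑α = (α c) • (1 : Matrix (Fin d) (Fin d) E) := by
    rw [hscal]
    ext i j
    by_cases h : i = j <;>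
      simp [Matrix.map_apply, Matrix.one_apply, h]
  have hCne : Cm ≠ 0 := by
    intro h0
    have : (C.det : E) ≠ 0 := by
      simpa using (Matrix.isUnit_iff_isUnit_det Cm).mp C.isUnit |>.ne_zero
    apply this
    haveI : Nonempty (Fin d) := ⟨⟨0, hd⟩⟩
    rw [show C.det = Cm.det from rfl, h0, Matrix.det_zero]
  have hfix : α c = c := by
    have h1 : (α c) • Cm = c • Cm := by
      have := hshift
      rw [hmap_scal, hscal] at this
      calc (α c) • Cm = Cm * ((α c) • 1) := by
            rw [Matrix.mul_smul, mul_one]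
        _ = (c • 1) * Cm := this
        _ = c • Cm := by rw [Matrix.smul_mul, one_mul]
    by_contra hne
    apply hCne
    have h2 := sub_eq_zero.mpr h1
    rw [← sub_smul] at h2
    exact (smul_eq_zero.mp h2).resolve_left (sub_ne_zero.mpr hne)
  -- c is fixed by the whole Galois group, hence lies in F
  have hfixAll : ∀ σ : E ≃ₐ[F] E, σ c = c := by
    let S : Subgroup (E ≃ₐ[F] E) :=
      { carrier := {σ | σ c = c}
        one_mem' := rfl
        mul_mem' := by
          intro a b ha hb
          show a (b c) = c
          rw [hb, ha]
        inv_mem' := by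
          intro σ hσ
          show σ⁻¹ c = c
          replace hσ : σ c = c := hσ
          conv_lhs => rw [← hσ]
          have h2 : (σ⁻¹ * σ) c = c := by rw [inv_mul_cancel]; rfl
          exact h2 }
    intro σ
    have hmem : α ∈ S := hfix
    have hle : Subgroup.zpowers α ≤ S := Subgroup.zpowers_le.mpr hmem
    exact hle (hgen σ)
  have hbot : IntermediateField.fixedField (⊤ : Subgroup (E ≃ₐ[F] E)) = ⊥ := by
    have h := (IsGalois.tfae (F := F) (E := E)).out 0 1
    exact h.mp ‹IsGalois F E›
  have hcmem : c ∈ IntermediateField.fixedField (⊤ : Subgroup (E ≃ₐ[F] E)) := by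
    intro σ
    exact hfixAll σ
  rw [hbot, IntermediateField.mem_bot] at hcmem
  obtain ⟨μ, hμ⟩ := hcmem
  refine ⟨μ, ?_⟩
  rw [← hμ] at hscal
  exact hscal
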